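/- arXiv:2208.03173 — 2 statements merged into one kernel-verified Lean document; each statement's English description precedes it below -/
import Mathlib

section
/- Let C be a triangulated category and N ⊆ C a thick subcategory with Verdier quotient C/N. (i) There is at most one pair (P_N, P_{C/N}) of slicings of N and of C/N compatible with a given slicing P of C; when it exists, P_N(φ) = P(φ) ∩ N and P_{C/N}(φ) is the isomorphism closure of P(φ) in C/N, for every φ ∈ ℝ. (ii) Conversely, there is at most one slicing P of C compatible with a given pair (P_N, P_{C/N}); when it exists, an object c lies in P(φ) if and only if c ∈ P_{C/N}(φ) and Hom_C(b, c) = 0 = Hom_C(c, d) for all b ∈ P_N(ψ) with ψ > φ and all d ∈ P_N(ψ') with ψ' < φ. -/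
open CategoryTheory CategoryTheory.Limits CategoryTheory.Pretriangulated
open scoped ENNReal

namespace PaperStab

attribute [local instance] Classical.propDecidable

universe w w₂ u v u₂ v₂

variable (C : Type u) [Category.{v} C] [Preadditive C] [HasZeroObject C]
  [HasShift C ℤ] [∀ n : ℤ, (shiftFunctor C n).Additive] [Pretriangulated C]

/-- A Harder–Narasimhan filtration of `X` with factors in the slices `P`. -/
structure HNFiltration (P : ℝ → Set C) (X : C) where
  n : ℕ
  obj : Fin (n + 1) → C
  isZero_zero : IsZero (obj 0)
  last_eq : obj (Fin.last n) = X
  map : ∀ i : Fin n, obj i.castSucc ⟶ obj i.succ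
  factor : Fin n → C
  phase : Fin n → ℝ
  phase_anti : ∀ i j : Fin n, i < j → phase j < phase i
  factor_nonzero : ∀ i, ¬ IsZero (factor i)
  factor_mem : ∀ i, factor i ∈ P (phase i)
  toFactor : ∀ i : Fin n, obj i.succ ⟶ factor i
  toShift : ∀ i : Fin n, factor i ⟶ (obj i.castSucc)⟦(1 : ℤ)⟧
  distinguished : ∀ i : Fin n,
    Triangle.mk (map i) (toFactor i) (toShift i) ∈ distTriang C

/-- A slicing of the full (triangulated) subcategory of `C` on the objects `N`.
A slicing of `C` itself is the case `N = Set.univ`. -/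
structure Slicing (N : Set C) where
  P : ℝ → Set C
  subset : ∀ φ : ℝ, P φ ⊆ N
  isoClosed : ∀ (φ : ℝ) ⦃X Y : C⦄, (X ≅ Y) → Y ∈ N → X ∈ P φ → Y ∈ P φ
  zero_mem : ∀ (φ : ℝ) ⦃X : C⦄, IsZero X → X ∈ N → X ∈ P φ
  shift_mem : ∀ (φ : ℝ) (X : C), X ∈ P (φ + 1) ↔ X⟦(-1 : ℤ)⟧ ∈ P φ
  hom_orth : ∀ ⦃φ ψ : ℝ⦄, ψ < φ → ∀ ⦃X Y : C⦄, X ∈ P φ → Y ∈ P ψ → ∀ f : X ⟶ Y, f = 0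
  hn : ∀ X ∈ N, ¬ IsZero X → Nonempty (HNFiltration C P X)

/-- Thick subcategory: strictly full triangulated subcategory closed under direct summands. -/
structure IsThick (N : Set C) : Prop where
  isoClosed : ∀ ⦃X Y : C⦄, (X ≅ Y) → X ∈ N → Y ∈ N
  zero_mem : ∀ ⦃X : C⦄, IsZero X → X ∈ N
  shift_mem : ∀ (X : C) (k : ℤ), X ∈ N → X⟦k⟧ ∈ N
  ext_mem : ∀ T ∈ distTriang C, T.obj₁ ∈ N → T.obj₃ ∈ N → T.obj₂ ∈ N
  summand_mem : ∀ ⦃X Z : C⦄ (i : X ⟶ Z) (r : Z ⟶ X), i ≫ r = 𝟙 X → Z ∈ N → X ∈ N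

/-- The set `M` is (the object set of) a strictly full triangulated subcategory. -/
def IsTriangulatedClosed (M : Set C) : Prop :=
  (∀ ⦃X Y : C⦄, (X ≅ Y) → X ∈ M → Y ∈ M) ∧ (∀ ⦃X : C⦄, IsZero X → X ∈ M) ∧
  (∀ (X : C) (k : ℤ), X ∈ M → X⟦k⟧ ∈ M) ∧
  (∀ T ∈ distTriang C, T.obj₁ ∈ M → T.obj₃ ∈ M → T.obj₂ ∈ M)

/-- Triangulated closure: smallest strictly full triangulated subcategory containing `S0`. -/
def triangClosure (S0 : Set C) : Set C :=
  ⋂₀ {M : Set C | S0 ⊆ M ∧ IsTriangulatedClosed C M}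

/-- No infinite chains of proper strict subobjects or proper strict quotients within `H`
(with respect to the strict exact structure induced by the triangles of `C`);
this expresses that `H` is a length (quasi-abelian) category. -/
def NoInfiniteChains (H : Set C) : Prop :=
  (¬ ∃ (X : ℕ → C) (f : ∀ k : ℕ, X (k + 1) ⟶ X k), ∀ k : ℕ,
      X (k + 1) ∈ H ∧ X k ∈ H ∧ ∃ (Q : C) (g : X k ⟶ Q) (h : Q ⟶ (X (k + 1))⟦(1 : ℤ)⟧),
        Triangle.mk (f k) g h ∈ (distTriang C) ∧ Q ∈ H ∧ ¬ IsZero Q) ∧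
  (¬ ∃ (X : ℕ → C) (f : ∀ k : ℕ, X k ⟶ X (k + 1)), ∀ k : ℕ,
      X k ∈ H ∧ X (k + 1) ∈ H ∧ ∃ (A : C) (e : A ⟶ X k) (h : X (k + 1) ⟶ A⟦(1 : ℤ)⟧),
        Triangle.mk e (f k) h ∈ (distTriang C) ∧ A ∈ H ∧ ¬ IsZero A)

/-- `X` is a simple object of the (quasi-)abelian subcategory on `H`. -/
def IsSimpleIn (H : Set C) (X : C) : Prop :=
  X ∈ H ∧ ¬ IsZero X ∧ ∀ (A Q : C) (f : A ⟶ X) (g : X ⟶ Q) (h : Q ⟶ A⟦(1 : ℤ)⟧),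
    Triangle.mk f g h ∈ (distTriang C) → A ∈ H → Q ∈ H → IsZero A ∨ IsZero Q

/-- An algebraic heart: a length category with finitely many simple objects up to isomorphism. -/
def AlgebraicHeart (H : Set C) : Prop :=
  NoInfiniteChains C H ∧ ∃ S : Set C, S.Finite ∧
    (∀ X ∈ S, IsSimpleIn C H X) ∧ ∀ X : C, IsSimpleIn C H X → ∃ Y ∈ S, Nonempty (X ≅ Y)

/-- A torsion pair `(T, Fr)` on the heart `H`. -/
def TorsionPair (H T Fr : Set C) : Prop :=
  T ⊆ H ∧ Fr ⊆ H ∧ (∀ X ∈ T, ∀ Y ∈ Fr, ∀ f : X ⟶ Y, f = 0) ∧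
  ∀ X ∈ H, ∃ (A B : C) (f : A ⟶ X) (g : X ⟶ B) (h : B ⟶ A⟦(1 : ℤ)⟧),
    Triangle.mk f g h ∈ (distTriang C) ∧ A ∈ T ∧ B ∈ Fr

/-- The class of morphisms with cone in `N`; inverting it gives the Verdier quotient `C/N`. -/
def VerdierW (N : Set C) : MorphismProperty C := fun X Y f =>
  ∃ (Z : C) (g : Y ⟶ Z) (h : Z ⟶ X⟦(1 : ℤ)⟧), Triangle.mk f g h ∈ (distTriang C) ∧ Z ∈ N

variable {C}

noncomputable def Slicing.maxPhase {N : Set C} (S : Slicing C N) (X : C) : ℝ :=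
  if h : X ∈ N ∧ ¬ IsZero X then ⨆ i, (S.hn X h.1 h.2).some.phase i else 0

noncomputable def Slicing.minPhase {N : Set C} (S : Slicing C N) (X : C) : ℝ :=
  if h : X ∈ N ∧ ¬ IsZero X then ⨅ i, (S.hn X h.1 h.2).some.phase i else 0

/-- The metric on slicings, `d(S, T) = sup max (|φ⁺_S - φ⁺_T|) (|φ⁻_S - φ⁻_T|)`,
with values in `[0, ∞]`. -/
noncomputable def slicingDist {N : Set C} (S T : Slicing C N) : ℝ≥0∞ :=
  ⨆ X : C, ENNReal.ofReal
    (max |S.maxPhase X - T.maxPhase X| |S.minPhase X - T.minPhase X|)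

/-- `P(I)`: objects whose HN factors have phases in the interval `I`. -/
def Slicing.interval {N : Set C} (S : Slicing C N) (I : Set ℝ) : Set C :=
  {X | X ∈ N ∧ (IsZero X ∨ ∃ F : HNFiltration C S.P X, ∀ i, F.phase i ∈ I)}

/-- `P(I)` is a length quasi-abelian category. -/
def Slicing.LengthOn {N : Set C} (S : Slicing C N) (I : Set ℝ) : Prop :=
  NoInfiniteChains C (S.interval I)

def Slicing.LocallyFinite {N : Set C} (S : Slicing C N) : Prop :=
  ∃ ε > (0 : ℝ), ∀ φ : ℝ, S.LengthOn (Set.Ioo (φ - ε) (φ + ε))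

/-- The slicing `S` restricts to the subcategory `N`: HN factors of objects of `N` lie in `N`. -/
def Slicing.RestrictsTo {N0 : Set C} (S : Slicing C N0) (N : Set C) : Prop :=
  ∀ X ∈ N, ¬ IsZero X → ∃ F : HNFiltration C S.P X, ∀ i, F.factor i ∈ N

/-- `P(I) ∩ N` is a Serre subcategory of `P(I)`. -/
def Slicing.SerreOn {N0 : Set C} (S : Slicing C N0) (N : Set C) (I : Set ℝ) : Prop :=
  ∀ T ∈ distTriang C, T.obj₁ ∈ S.interval I → T.obj₂ ∈ S.interval I →
    T.obj₃ ∈ S.interval I → (T.obj₂ ∈ N ↔ T.obj₁ ∈ N ∧ T.obj₃ ∈ N)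

/-- The slicing `S` is adapted to the thick subcategory `N`. -/
def Slicing.IsAdapted {N0 : Set C} (S : Slicing C N0) (N : Set C) : Prop :=
  S.RestrictsTo N ∧
    ∀ φ : ℝ, S.SerreOn N (Set.Ioc φ (φ + 1)) ∧ S.SerreOn N (Set.Ico φ (φ + 1))

variable (C)
variable (E : Type w) [NormedAddCommGroup E] [InnerProductSpace ℝ E] [FiniteDimensional ℝ E]

/-- The data of the map `v : K(C) → Λ`, realised on `Λ ⊗ ℝ = E`. -/
structure ChargeData where
  v : C → E
  additive : ∀ T ∈ distTriang C, v T.obj₂ = v T.obj₁ + v T.obj₃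

/-- A lax pre-stability condition on the (full triangulated) subcategory `N ⊆ C`,
with locally finite slicing, and charge a linear map `E → ℂ`. -/
structure LaxPreStab (N : Set C) (vd : ChargeData C E) where
  slicing : Slicing C N
  locallyFinite : slicing.LocallyFinite
  Z : E →L[ℝ] ℂ
  compat : ∀ (φ : ℝ) (X : C), X ∈ slicing.P φ → ∃ m : ℝ, 0 ≤ m ∧
    Z (vd.v X) = (m : ℂ) * Complex.exp (↑(Real.pi * φ) * Complex.I)

variable {C E}

/-- The mass of an object: sum of the masses of its HN factors. -/
noncomputable def LaxPreStab.mass {N : Set C} {vd : ChargeData C E}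
    (σ : LaxPreStab C E N vd) (X : C) : ℝ :=
  if h : X ∈ N ∧ ¬ IsZero X then
    ∑ i, ‖σ.Z (vd.v ((σ.slicing.hn X h.1 h.2).some.factor i))‖
  else 0

/-- The massless subcategory of a lax pre-stability condition. -/
def LaxPreStab.massless {N : Set C} {vd : ChargeData C E}
    (σ : LaxPreStab C E N vd) : Set C :=
  {X | X ∈ N ∧ σ.mass X = 0}


/-- The set of phases of the massive HN factors of an object. -/
noncomputable def LaxPreStab.massivePhases {N : Set C} {vd : ChargeData C E}
    (σ : LaxPreStab C E N vd) (X : C) : Set ℝ :=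
  if h : X ∈ N ∧ ¬ IsZero X then
    {φ | ∃ i, (σ.slicing.hn X h.1 h.2).some.phase i = φ ∧
      σ.Z (vd.v ((σ.slicing.hn X h.1 h.2).some.factor i)) ≠ 0}
  else ∅

/-- A stable object of phase `φ`: a simple object of the slice `P(φ)`. -/
def Slicing.IsStableIn {N : Set C} (S : Slicing C N) (φ : ℝ) (X : C) : Prop :=
  ¬ IsZero X ∧ X ∈ S.P φ ∧
    ∀ (A Q : C) (f : A ⟶ X) (g : X ⟶ Q) (h : Q ⟶ A⟦(1 : ℤ)⟧),
      Triangle.mk f g h ∈ (distTriang C) → A ∈ S.P φ → Q ∈ S.P φ → IsZero A ∨ IsZero Q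

def Slicing.IsStable {N : Set C} (S : Slicing C N) (X : C) : Prop :=
  ∃ φ : ℝ, S.IsStableIn φ X

def LaxPreStab.MassiveStable {N : Set C} {vd : ChargeData C E}
    (σ : LaxPreStab C E N vd) (X : C) : Prop :=
  σ.slicing.IsStable X ∧ σ.Z (vd.v X) ≠ 0

/-- The support property: `|Z(v(s))| ≥ ‖v(s)‖ / K` for all massive stable `s`. -/
def LaxPreStab.HasSupport {N : Set C} {vd : ChargeData C E}
    (σ : LaxPreStab C E N vd) : Prop :=
  ∃ K > (0 : ℝ), ∀ X : C, σ.MassiveStable X → ‖vd.v X‖ / K ≤ ‖σ.Z (vd.v X)‖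

/-- A classical (pre-)stability condition: every non-zero object is massive. -/
def LaxPreStab.IsClassical {N : Set C} {vd : ChargeData C E}
    (σ : LaxPreStab C E N vd) : Prop :=
  ∀ X ∈ N, σ.mass X = 0 → IsZero X

/-- The semi-norm `‖W‖_σ` associated to a lax pre-stability condition, valued in `[0,∞]`. -/
noncomputable def LaxPreStab.seminorm {N : Set C} {vd : ChargeData C E}
    (σ : LaxPreStab C E N vd) (W : E →L[ℝ] ℂ) : ℝ≥0∞ :=
  ⨆ (X : C) (_ : σ.MassiveStable X), ENNReal.ofReal (‖W (vd.v X)‖ / ‖σ.Z (vd.v X)‖)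

/-- The (extended pseudo-)metric `max (d(P,Q)) (‖W - Z‖)` on the space of
lax pre-stability conditions; this induces the topology of
`Slice(C) × Hom(Λ, ℂ)`. -/
noncomputable instance {N : Set C} {vd : ChargeData C E} :
    PseudoEMetricSpace (LaxPreStab C E N vd) where
  edist σ τ := max (slicingDist σ.slicing τ.slicing) (ENNReal.ofReal ‖σ.Z - τ.Z‖)
  edist_self σ := by
    have h1 : slicingDist σ.slicing σ.slicing = 0 := by
      unfold slicingDist
      refine le_antisymm (iSup_le fun X => by simp) zero_le
    have h2 : ENNReal.ofReal ‖σ.Z - σ.Z‖ = 0 := by simp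
    simp [h1, h2]
  edist_comm σ τ := by
    show max (slicingDist σ.slicing τ.slicing) (ENNReal.ofReal ‖σ.Z - τ.Z‖) =
      max (slicingDist τ.slicing σ.slicing) (ENNReal.ofReal ‖τ.Z - σ.Z‖)
    have h1 : slicingDist σ.slicing τ.slicing = slicingDist τ.slicing σ.slicing := by
      unfold slicingDist
      refine iSup_congr fun X => ?_
      rw [abs_sub_comm (Slicing.maxPhase σ.slicing X) (Slicing.maxPhase τ.slicing X),
        abs_sub_comm (Slicing.minPhase σ.slicing X) (Slicing.minPhase τ.slicing X)]
    rw [h1, norm_sub_rev]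
  edist_triangle σ τ ρ := by
    show max (slicingDist σ.slicing ρ.slicing) (ENNReal.ofReal ‖σ.Z - ρ.Z‖) ≤
      max (slicingDist σ.slicing τ.slicing) (ENNReal.ofReal ‖σ.Z - τ.Z‖) +
      max (slicingDist τ.slicing ρ.slicing) (ENNReal.ofReal ‖τ.Z - ρ.Z‖)
    apply max_le
    · have h1 : slicingDist σ.slicing ρ.slicing ≤
          slicingDist σ.slicing τ.slicing + slicingDist τ.slicing ρ.slicing := by
        unfold slicingDist
        refine iSup_le fun X => ?_
        have hre : max |Slicing.maxPhase σ.slicing X - Slicing.maxPhase ρ.slicing X|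
              |Slicing.minPhase σ.slicing X - Slicing.minPhase ρ.slicing X| ≤
            (max |Slicing.maxPhase σ.slicing X - Slicing.maxPhase τ.slicing X|
              |Slicing.minPhase σ.slicing X - Slicing.minPhase τ.slicing X|) +
            (max |Slicing.maxPhase τ.slicing X - Slicing.maxPhase ρ.slicing X|
              |Slicing.minPhase τ.slicing X - Slicing.minPhase ρ.slicing X|) := by
          apply max_le
          · exact (abs_sub_le _ _ _).trans (add_le_add (le_max_left _ _) (le_max_left _ _))
          · exact (abs_sub_le _ _ _).trans (add_le_add (le_max_right _ _) (le_max_right _ _))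
        refine le_trans (ENNReal.ofReal_le_ofReal hre) ?_
        refine le_trans ENNReal.ofReal_add_le ?_
        refine add_le_add ?_ ?_
        · exact le_iSup (fun Y : C => ENNReal.ofReal
            (max |Slicing.maxPhase σ.slicing Y - Slicing.maxPhase τ.slicing Y|
              |Slicing.minPhase σ.slicing Y - Slicing.minPhase τ.slicing Y|)) X
        · exact le_iSup (fun Y : C => ENNReal.ofReal
            (max |Slicing.maxPhase τ.slicing Y - Slicing.maxPhase ρ.slicing Y|
              |Slicing.minPhase τ.slicing Y - Slicing.minPhase ρ.slicing Y|)) X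
      exact h1.trans (add_le_add (le_max_left _ _) (le_max_left _ _))
    · have h2 : ENNReal.ofReal ‖σ.Z - ρ.Z‖ ≤
          ENNReal.ofReal ‖σ.Z - τ.Z‖ + ENNReal.ofReal ‖τ.Z - ρ.Z‖ := by
        refine le_trans (ENNReal.ofReal_le_ofReal ?_) ENNReal.ofReal_add_le
        have := dist_triangle σ.Z τ.Z ρ.Z
        simpa [dist_eq_norm] using this
      exact h2.trans (add_le_add (le_max_right _ _) (le_max_right _ _))

/-- The set of classical stability conditions on the subcategory `N` (charge factoring
through `v`), as a subset of the space of lax pre-stability conditions. -/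
def StabSet (N : Set C) (vd : ChargeData C E) : Set (LaxPreStab C E N vd) :=
  {σ | σ.IsClassical ∧ σ.HasSupport}

/-- The space of lax stability conditions: lax pre-stability conditions satisfying the
support property and lying in the closure of the space of classical stability conditions. -/
def StabL (N : Set C) (vd : ChargeData C E) : Set (LaxPreStab C E N vd) :=
  {σ | σ.HasSupport ∧ σ ∈ closure (StabSet N vd)}

/-- Lax stability conditions with massless subcategory exactly `M`. -/
def StabLN (N : Set C) (vd : ChargeData C E) (M : Set C) : Set (LaxPreStab C E N vd) :=
  {σ | σ ∈ StabL N vd ∧ σ.massless = M}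

/-- `τ ∈ B_ε(σ)`. -/
def memB {N : Set C} {vd : ChargeData C E} (σ τ : LaxPreStab C E N vd) (ε : ℝ) : Prop :=
  slicingDist σ.slicing τ.slicing < ENNReal.ofReal ε ∧
  σ.seminorm (τ.Z - σ.Z) < ENNReal.ofReal (Real.sin (Real.pi * ε))

/-- `Λ_N ⊗ ℝ`: the (real span of the) saturation of the image of `K(N)` in `Λ`. -/
def chargeSpan (vd : ChargeData C E) (N : Set C) : Submodule ℝ E :=
  Submodule.span ℝ (vd.v '' N)

/-- `W ↦ W_N`: restriction of a charge to `Λ_N`, viewed in `Hom(Λ, ℂ)` via the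
orthogonal splitting. -/
noncomputable def restrictCharge (K : Submodule ℝ E) (W : E →L[ℝ] ℂ) : E →L[ℝ] ℂ :=
  W.comp (K.subtypeL.comp K.orthogonalProjectionOnto)

variable (C) in
/-- The charge data `v_N : K(N) → Λ_N` for a thick subcategory `N`. -/
noncomputable def chargeDataOn (vd : ChargeData C E) (N : Set C) :
    ChargeData C ↥(chargeSpan vd N) where
  v X := (chargeSpan vd N).orthogonalProjectionOnto (vd.v X)
  additive T hT := by simp only [vd.additive T hT, map_add]

/-- The image in the quotient of the slices of a slicing:
`P_{C/N}(φ)` is the isomorphism closure of `P(φ)` in `C/N`. -/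
def QuotSlices {D : Type u₂} [Category.{v₂} D] (F : C ⥤ D) (P : ℝ → Set C) (φ : ℝ) :
    Set D :=
  {d | ∃ c ∈ P φ, Nonempty (d ≅ F.obj c)}

/-- Essential image of `N` under the quotient functor, i.e. `N/M ⊆ C/M`. -/
def quotImage {D : Type u₂} [Category.{v₂} D] (F : C ⥤ D) (N : Set C) : Set D :=
  {d | ∃ c ∈ N, Nonempty (d ≅ F.obj c)}

/-- Compatibility of a slicing of `C` with a pair of slicings of `N` and of `C/N`. -/
def Compatible {D : Type u₂} [Category.{v₂} D] [Preadditive D] [HasZeroObject D]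
    [HasShift D ℤ] [∀ n : ℤ, (shiftFunctor D n).Additive] [Pretriangulated D]
    (F : C ⥤ D) {N : Set C}
    (S : Slicing C Set.univ) (SN : Slicing C N) (SQ : Slicing D Set.univ) : Prop :=
  (∀ φ : ℝ, SN.P φ ⊆ S.P φ) ∧ ∀ (φ : ℝ) (X : C), X ∈ S.P φ → F.obj X ∈ SQ.P φ

/-- A slicing is well-adapted to `N` if it is adapted to it and the quotient
slicing on `C/N` is locally finite. -/
def WellAdapted {D : Type u₂} [Category.{v₂} D] [Preadditive D] [HasZeroObject D]
    [HasShift D ℤ] [∀ n : ℤ, (shiftFunctor D n).Additive] [Pretriangulated D]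
    (F : C ⥤ D) (S : Slicing C Set.univ) (N : Set C) : Prop :=
  S.IsAdapted N ∧ ∃ SQ : Slicing D Set.univ,
    (∀ φ : ℝ, SQ.P φ = QuotSlices F S.P φ) ∧ SQ.LocallyFinite

/-- Support propagates from `σ` (with massless subcategory `N`) with constant `ε`. -/
def SupportPropagatesAt (vd : ChargeData C E) (N : Set C)
    (σ : LaxPreStab C E Set.univ vd) (ε : ℝ) : Prop :=
  ∀ τ : LaxPreStab C E Set.univ vd, memB σ τ ε →
    σ.seminorm (σ.Z - (τ.Z - restrictCharge (chargeSpan vd N) τ.Z)) <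
      ENNReal.ofReal (Real.sin (Real.pi * ε)) →
    (∃ τN : LaxPreStab C ↥(chargeSpan vd N) N (chargeDataOn C vd N),
        (∀ φ : ℝ, τN.slicing.P φ = τ.slicing.P φ ∩ N) ∧
        (∀ x : ↥(chargeSpan vd N), τN.Z x = τ.Z ↑x) ∧
        τN ∈ StabL N (chargeDataOn C vd N)) →
    τ ∈ StabL Set.univ vd

/-- Support propagates from `Stab_{l,N}(C)`: uniformly on each connected component. -/
def SupportPropagatesFrom (vd : ChargeData C E) (N : Set C) : Prop :=
  ∀ σ ∈ StabLN Set.univ vd N, ∃ ε > (0 : ℝ),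
    ∀ σ' ∈ connectedComponentIn (StabLN Set.univ vd N) σ, SupportPropagatesAt vd N σ' ε

/-- `f` is a homeomorphism onto its image, which is a union of connected components. -/
def IsHomeoOntoComponents {α : Type*} {β : Type*} [TopologicalSpace α]
    [TopologicalSpace β] (f : α → β) : Prop :=
  Continuous f ∧ Function.Injective f ∧
  (∀ U : Set α, IsOpen U → ∃ V : Set β, IsOpen V ∧ f '' U = V ∩ Set.range f) ∧
  (∀ x ∈ Set.range f, connectedComponent x ⊆ Set.range f)

/-- The equivalence relation on lax stability conditions defining the space of
quotient stability conditions: same charge and same connected component of the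
fibre of the charge map. -/
def qRel (vd : ChargeData C E) :
    ↥(StabL (C := C) Set.univ vd) → ↥(StabL (C := C) Set.univ vd) → Prop :=
  fun σ τ => σ.1.Z = τ.1.Z ∧
    τ ∈ connectedComponentIn {ρ : ↥(StabL (C := C) Set.univ vd) | ρ.1.Z = σ.1.Z} σ

/-- The space of quotient stability conditions, with the quotient topology. -/
def QStab (vd : ChargeData C E) : Type _ := Quot (qRel vd)

noncomputable instance (vd : ChargeData C E) : TopologicalSpace (QStab vd) :=
  inferInstanceAs (TopologicalSpace (Quot _))

/-- The stratum of quotient stability conditions with massless subcategory `N`. -/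
def QStabN (vd : ChargeData C E) (N : Set C) : Set (QStab vd) :=
  {q | ∃ σ : ↥(StabL (C := C) Set.univ vd), σ.1 ∈ StabLN Set.univ vd N ∧ Quot.mk _ σ = q}

/-- The charge map on the space of quotient stability conditions. -/
def qCharge (vd : ChargeData C E) : QStab vd → (E →L[ℝ] ℂ) :=
  Quot.lift (fun σ => σ.1.Z) (fun _ _ h => h.1)


section Aux

open CategoryTheory.Limits

/-- A filtration with distinguished-triangle graded pieces (no nonzero/membership data). -/
structure PreFil {C : Type u} [Category.{v} C] [Preadditive C] [HasZeroObject C]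
    [HasShift C ℤ] [∀ n : ℤ, (shiftFunctor C n).Additive] [Pretriangulated C] (X : C) where
  n : ℕ
  obj : Fin (n + 1) → C
  isZero_zero : IsZero (obj 0)
  last_eq : obj (Fin.last n) = X
  map : ∀ i : Fin n, obj i.castSucc ⟶ obj i.succ
  factor : Fin n → C
  phase : Fin n → ℝ
  phase_anti : ∀ i j : Fin n, i < j → phase j < phase i
  toFactor : ∀ i : Fin n, obj i.succ ⟶ factor i
  toShift : ∀ i : Fin n, factor i ⟶ (obj i.castSucc)⟦(1 : ℤ)⟧
  distinguished : ∀ i : Fin n,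
    Triangle.mk (map i) (toFactor i) (toShift i) ∈ distTriang C

variable {C : Type u} [Category.{v} C] [Preadditive C] [HasZeroObject C]
  [HasShift C ℤ] [∀ n : ℤ, (shiftFunctor C n).Additive] [Pretriangulated C]

/-- Forget the extra data of a Harder–Narasimhan filtration. -/
def HNFiltration.pre {P : ℝ → Set C} {X : C} (F : HNFiltration C P X) : PreFil X where
  n := F.n
  obj := F.obj
  isZero_zero := F.isZero_zero
  last_eq := F.last_eq
  map := F.map
  factor := F.factor
  phase := F.phase
  phase_anti := F.phase_anti
  toFactor := F.toFactor
  toShift := F.toShift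
  distinguished := F.distinguished

lemma PreFil.phase_antitone {X : C} (W : PreFil X) {i j : Fin W.n} (h : i ≤ j) :
    W.phase j ≤ W.phase i := by
  rcases eq_or_lt_of_le h with rfl | h
  · exact le_rfl
  · exact (W.phase_anti i j h).le

/-- Push a filtration forward along a triangulated functor. -/
def PreFil.push {X : C} (W : PreFil X) {D : Type u₂} [Category.{v₂} D] [Preadditive D]
    [HasZeroObject D] [HasShift D ℤ] [∀ n : ℤ, (shiftFunctor D n).Additive]
    [Pretriangulated D] (G : C ⥤ D) [G.CommShift ℤ] [G.IsTriangulated] :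
    PreFil (G.obj X) where
  n := W.n
  obj j := G.obj (W.obj j)
  isZero_zero := G.map_isZero W.isZero_zero
  last_eq := congrArg G.obj W.last_eq
  map i := G.map (W.map i)
  factor i := G.obj (W.factor i)
  phase := W.phase
  phase_anti := W.phase_anti
  toFactor i := G.map (W.toFactor i)
  toShift i := G.map (W.toShift i) ≫ (G.commShiftIso (1 : ℤ)).hom.app (W.obj i.castSucc)
  distinguished i := G.map_distinguished _ (W.distinguished i)

section HomLemmas

variable {P : ℝ → Set C}

/-- Maps from a stage of a filtration to a semistable object of lower phase vanish. -/
lemma PreFil.hom_to_low {X : C} (W : PreFil X)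
    (horth : ∀ ⦃φ ψ : ℝ⦄, ψ < φ → ∀ ⦃A B : C⦄, A ∈ P φ → B ∈ P ψ → ∀ f : A ⟶ B, f = 0)
    (hfac : ∀ i, W.factor i ∈ P (W.phase i))
    {Y : C} {ψ : ℝ} (hY : Y ∈ P ψ) :
    ∀ j : Fin (W.n + 1), (∀ i : Fin W.n, i.succ ≤ j → ψ < W.phase i) →
      ∀ f : W.obj j ⟶ Y, f = 0 := by
  intro j
  induction j using Fin.induction with
  | zero => exact fun _ f => W.isZero_zero.eq_of_src f 0
  | succ i IH =>
    intro hj f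
    have h1 : W.map i ≫ f = 0 :=
      IH (fun i' hi' => hj i' (hi'.trans (Fin.castSucc_lt_succ : i.castSucc < i.succ).le)) _
    obtain ⟨g, hg⟩ := Triangle.yoneda_exact₂ _ (W.distinguished i) f h1
    rw [hg, horth (hj i le_rfl) (hfac i) hY g]; exact comp_zero

/-- If every map from a semistable stage to the total object vanishes,
the stage is zero. -/
lemma PreFil.zero_of_orth {X : C} (W : PreFil X)
    (horth : ∀ ⦃φ ψ : ℝ⦄, ψ < φ → ∀ ⦃A B : C⦄, A ∈ P φ → B ∈ P ψ → ∀ f : A ⟶ B, f = 0)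
    (hshift : ∀ (φ : ℝ) (A : C), A ∈ P (φ + 1) ↔ A⟦(-1 : ℤ)⟧ ∈ P φ)
    (hfac : ∀ i, W.factor i ∈ P (W.phase i))
    (k : Fin (W.n + 1)) {α : ℝ} (hk : W.obj k ∈ P α)
    (hph : ∀ i : Fin W.n, k ≤ i.castSucc → W.phase i < α + 1)
    (htop : ∀ u : W.obj k ⟶ X, u = 0) :
    IsZero (W.obj k) := by
  have M : ∀ j : Fin (W.n + 1), k ≤ j → ∀ u : W.obj k ⟶ W.obj j, u = 0 := by
    intro j
    induction j using Fin.reverseInduction with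
    | last =>
      intro _ u
      have h0 : u ≫ eqToHom W.last_eq = 0 := htop _
      have hu : u = (u ≫ eqToHom W.last_eq) ≫ eqToHom W.last_eq.symm := by simp
      rw [hu, h0, zero_comp]
    | cast i IH =>
      intro hk' u
      have h2 : u ≫ W.map i = 0 :=
        IH (hk'.trans (Fin.castSucc_lt_succ : i.castSucc < i.succ).le) _
      obtain ⟨g, hg⟩ := Triangle.coyoneda_exact₂ _
        (inv_rot_of_distTriang _ (W.distinguished i)) u h2
      have hmem : (W.factor i)⟦(-1 : ℤ)⟧ ∈ P (W.phase i - 1) :=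
        (hshift (W.phase i - 1) (W.factor i)).mp (by rw [sub_add_cancel]; exact hfac i)
      rw [hg, horth (show W.phase i - 1 < α by linarith [hph i hk']) hk hmem g]; exact zero_comp
  rw [IsZero.iff_id_eq_zero]
  exact M k le_rfl _

end HomLemmas

section HomLemmas2

variable {P : ℝ → Set C}

lemma shift_cancel_one {U V : C} (g : U⟦(1 : ℤ)⟧ ⟶ V)
    (h : ∀ f : U ⟶ V⟦(-1 : ℤ)⟧, f = 0) : g = 0 := by
  have h1 : (shiftFunctor C (-1 : ℤ)).map g = 0 := by
    have h2 := h ((shiftFunctorCompIsoId C (1 : ℤ) (-1 : ℤ) (by norm_num)).inv.app U ≫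
      (shiftFunctor C (-1 : ℤ)).map g)
    have h3 := congrArg (fun t => (shiftFunctorCompIsoId C (1 : ℤ) (-1 : ℤ)
      (by norm_num)).hom.app U ≫ t) h2
    simpa using h3
  apply (shiftFunctor C (-1 : ℤ)).map_injective
  rw [h1, Functor.map_zero]

lemma PreFil.topZero {X : C} (W : PreFil X)
    (hiso : ∀ (φ : ℝ) ⦃A B : C⦄, (A ≅ B) → A ∈ P φ → B ∈ P φ)
    (horth : ∀ ⦃φ ψ : ℝ⦄, ψ < φ → ∀ ⦃A B : C⦄, A ∈ P φ → B ∈ P ψ → ∀ f : A ⟶ B, f = 0)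
    (hshift : ∀ (φ : ℝ) (A : C), A ∈ P (φ + 1) ↔ A⟦(-1 : ℤ)⟧ ∈ P φ)
    (hfac : ∀ i, W.factor i ∈ P (W.phase i))
    {φ : ℝ} (hX : X ∈ P φ) :
    ∀ j : Fin (W.n + 1), (∀ i : Fin W.n, i.succ ≤ j → φ < W.phase i) →
      IsZero (W.obj j) := by
  intro j
  induction j using Fin.induction with
  | zero => exact fun _ => W.isZero_zero
  | succ i IH =>
    intro hj
    have hz : IsZero (W.obj i.castSucc) :=
      IH (fun i' hi' => hj i' (hi'.trans (Fin.castSucc_lt_succ : i.castSucc < i.succ).le))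
    haveI : IsIso (W.toFactor i) :=
      (Triangle.isZero₁_iff_isIso₂ _ (W.distinguished i)).mp hz
    have hmem : W.obj i.succ ∈ P (W.phase i) :=
      hiso _ (asIso (W.toFactor i)).symm (hfac i)
    refine W.zero_of_orth horth hshift hfac i.succ hmem (fun i' hi' => ?_) (fun u => ?_)
    · have hlt : i < i' := by
        rw [← Fin.castSucc_lt_castSucc_iff, Fin.castSucc_lt_iff_succ_le]
        exact hi'
      have := W.phase_anti i i' hlt
      linarith
    · exact horth (hj i le_rfl) hmem hX u

lemma PreFil.botIso {X : C} (W : PreFil X)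
    (hiso : ∀ (φ : ℝ) ⦃A B : C⦄, (A ≅ B) → A ∈ P φ → B ∈ P φ)
    (horth : ∀ ⦃φ ψ : ℝ⦄, ψ < φ → ∀ ⦃A B : C⦄, A ∈ P φ → B ∈ P ψ → ∀ f : A ⟶ B, f = 0)
    (hshift : ∀ (φ : ℝ) (A : C), A ∈ P (φ + 1) ↔ A⟦(-1 : ℤ)⟧ ∈ P φ)
    (hfac : ∀ i, W.factor i ∈ P (W.phase i))
    {φ : ℝ} (hX : X ∈ P φ) :
    ∀ j : Fin (W.n + 1), (∀ i : Fin W.n, j ≤ i.castSucc → W.phase i < φ) →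
      (W.obj j ∈ P φ ∧ Nonempty (W.obj j ≅ X) ∧
        ∀ i : Fin W.n, j ≤ i.castSucc → IsZero (W.factor i)) := by
  intro j
  induction j using Fin.reverseInduction with
  | last =>
    refine fun _ => ⟨by rw [W.last_eq]; exact hX, ⟨eqToIso W.last_eq⟩, fun i hi => ?_⟩
    exact absurd hi (not_le.mpr (Fin.castSucc_lt_last i))
  | cast j IH =>
    intro hj
    obtain ⟨memS, ⟨e⟩, hzf⟩ := IH (fun i hi =>
      hj i ((Fin.castSucc_lt_succ : j.castSucc < j.succ).le.trans hi))
    have hφj : W.phase j < φ := hj j le_rfl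
    have hto : W.toFactor j = 0 := horth hφj memS (hfac j) _
    obtain ⟨g, hg⟩ := Triangle.yoneda_exact₂ _
      (rot_of_distTriang _ (W.distinguished j)) (𝟙 (W.factor j))
      (by change W.toFactor j ≫ 𝟙 (W.factor j) = 0; rw [Category.comp_id, hto])
    have hgz : g = 0 := by
      refine shift_cancel_one g (fun f => ?_)
      have hmem : (W.factor j)⟦(-1 : ℤ)⟧ ∈ P (W.phase j - 1) :=
        (hshift (W.phase j - 1) (W.factor j)).mp
          (by rw [sub_add_cancel]; exact hfac j)
      refine W.hom_to_low horth hfac hmem j.castSucc (fun i hi => ?_) f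
      have hlt : i < j := by rwa [← Fin.castSucc_lt_castSucc_iff,
        Fin.castSucc_lt_iff_succ_le]
      have := W.phase_anti i j hlt
      linarith
    have hzfj : IsZero (W.factor j) := by
      rw [IsZero.iff_id_eq_zero, hg, hgz]; exact comp_zero
    haveI : IsIso (W.map j) :=
      (Triangle.isZero₃_iff_isIso₁ _ (W.distinguished j)).mp hzfj
    have e' : W.obj j.castSucc ≅ X := asIso (W.map j) ≪≫ e
    refine ⟨hiso _ (asIso (W.map j)).symm memS, ⟨e'⟩, fun i hi => ?_⟩
    rw [Fin.castSucc_le_castSucc_iff] at hi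
    rcases eq_or_lt_of_le hi with rfl | hlt
    · exact hzfj
    · exact hzf i (by rwa [← Fin.castSucc_lt_iff_succ_le, Fin.castSucc_lt_castSucc_iff])

lemma PreFil.concentrate {X : C} (W : PreFil X)
    (hiso : ∀ (φ : ℝ) ⦃A B : C⦄, (A ≅ B) → A ∈ P φ → B ∈ P φ)
    (horth : ∀ ⦃φ ψ : ℝ⦄, ψ < φ → ∀ ⦃A B : C⦄, A ∈ P φ → B ∈ P ψ → ∀ f : A ⟶ B, f = 0)
    (hshift : ∀ (φ : ℝ) (A : C), A ∈ P (φ + 1) ↔ A⟦(-1 : ℤ)⟧ ∈ P φ)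
    (hfac : ∀ i, W.factor i ∈ P (W.phase i))
    {φ : ℝ} (hX : X ∈ P φ) :
    IsZero X ∨ ∃ i : Fin W.n, W.phase i = φ ∧ Nonempty (W.factor i ≅ X) := by
  by_cases hall : ∀ i : Fin W.n, φ < W.phase i
  · left
    have := W.topZero hiso horth hshift hfac hX (Fin.last W.n) (fun i _ => hall i)
    rwa [W.last_eq] at this
  · push_neg at hall
    obtain ⟨i₁, hi₁⟩ := hall
    obtain ⟨i₀, hi₀s, hmin⟩ := Finset.exists_min_image
      (Finset.univ.filter (fun i => W.phase i ≤ φ)) id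
      ⟨i₁, by simpa using hi₁⟩
    simp only [Finset.mem_filter, Finset.mem_univ, true_and] at hi₀s
    have hbefore : ∀ i : Fin W.n, i < i₀ → φ < W.phase i := by
      intro i hi
      by_contra hc
      push_neg at hc
      exact absurd (hmin i (by simpa using hc)) (not_le.mpr hi)
    have hz : IsZero (W.obj i₀.castSucc) :=
      W.topZero hiso horth hshift hfac hX i₀.castSucc (fun i hi =>
        hbefore i (by rwa [← Fin.castSucc_lt_castSucc_iff, Fin.castSucc_lt_iff_succ_le]))
    rcases eq_or_lt_of_le hi₀s with heq | hlt
    · obtain ⟨_, ⟨e⟩, _⟩ := W.botIso hiso horth hshift hfac hX i₀.succ (fun i hi => by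
        have hlt' : i₀ < i := by rwa [← Fin.castSucc_lt_castSucc_iff,
          Fin.castSucc_lt_iff_succ_le]
        have := W.phase_anti i₀ i hlt'
        linarith [le_of_eq heq])
      haveI : IsIso (W.toFactor i₀) :=
        (Triangle.isZero₁_iff_isIso₂ _ (W.distinguished i₀)).mp hz
      exact Or.inr ⟨i₀, heq, ⟨(asIso (W.toFactor i₀)).symm ≪≫ e⟩⟩
    · obtain ⟨_, ⟨e⟩, _⟩ := W.botIso hiso horth hshift hfac hX i₀.castSucc (fun i hi => by
        rw [Fin.castSucc_le_castSucc_iff] at hi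
        exact lt_of_le_of_lt (W.phase_antitone hi) hlt)
      exact Or.inl (hz.of_iso e.symm)

/-- Dévissage kill: a composite through a filtered object vanishes when each graded
piece is either left-orthogonal to the target or right-orthogonal to the source. -/
lemma PreFil.killThru {M : C} (W : PreFil M) {X Y : C}
    (H : ∀ i j : Fin W.n, i ≤ j → ¬(∀ u : X ⟶ W.factor j, u = 0) →
      ∀ v : W.factor i ⟶ Y, v = 0)
    (b : X ⟶ M) (w : M ⟶ Y) : b ≫ w = 0 := by
  have main : ∀ (j : Fin (W.n + 1)) (b' : X ⟶ W.obj j) (w' : W.obj j ⟶ Y),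
      b' ≫ w' = 0 := by
    intro j
    induction j using Fin.induction with
    | zero =>
      intro b' w'
      rw [W.isZero_zero.eq_of_tgt b' 0, zero_comp]
    | succ j IH =>
      intro b' w'
      by_cases hs : ∀ u : X ⟶ W.factor j, u = 0
      · obtain ⟨b'', hb''⟩ := Triangle.coyoneda_exact₂ _ (W.distinguished j) b' (hs _)
        rw [hb'']
        exact (Category.assoc _ _ _).trans (IH b'' _)
      · have hw : ∀ (jj : Fin (W.n + 1)), jj ≤ j.succ → ∀ w'' : W.obj jj ⟶ Y, w'' = 0 := by
          intro jj
          induction jj using Fin.induction with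
          | zero => exact fun _ w'' => W.isZero_zero.eq_of_src w'' 0
          | succ i IH2 =>
            intro hle w''
            have hi : i ≤ j := by rwa [Fin.succ_le_succ_iff] at hle
            have h1 : W.map i ≫ w'' = 0 :=
              IH2 ((Fin.castSucc_lt_succ : i.castSucc < i.succ).le.trans hle) _
            obtain ⟨v, hv⟩ := Triangle.yoneda_exact₂ _ (W.distinguished i) w'' h1
            rw [hv, H i j hi hs v]; exact comp_zero
        rw [hw j.succ le_rfl w', comp_zero]
  have h := main (Fin.last W.n)
  have hb : b = (b ≫ eqToHom W.last_eq.symm) ≫ eqToHom W.last_eq := by simp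
  rw [hb, Category.assoc]
  rw [show eqToHom W.last_eq ≫ w = (eqToHom W.last_eq ≫ w : W.obj (Fin.last W.n) ⟶ Y) from rfl]
  exact h _ _

end HomLemmas2

section Ghost

open CategoryTheory.Limits ZeroObject

variable {N : Set C}

/-- Morphisms factoring through an object of `N`. -/
def FacN (N : Set C) {X Y : C} (f : X ⟶ Y) : Prop :=
  ∃ (M : C) (_ : M ∈ N) (b : X ⟶ M) (w : M ⟶ Y), f = b ≫ w

lemma IsThick.zeroObj_mem (hN : IsThick C N) : (0 : C) ∈ N :=
  hN.zero_mem (isZero_zero C)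

lemma facN_zero (hN : IsThick C N) (X Y : C) : FacN N (0 : X ⟶ Y) :=
  ⟨0, hN.zeroObj_mem, 0, 0, by simp⟩

lemma IsThick.biprod_mem (hN : IsThick C N) {M₁ M₂ : C} (h₁ : M₁ ∈ N) (h₂ : M₂ ∈ N) :
    (M₁ ⊞ M₂) ∈ N :=
  hN.ext_mem _ (binaryBiproductTriangle_distinguished M₁ M₂) h₁ h₂

lemma FacN.add (hN : IsThick C N) {X Y : C} {f g : X ⟶ Y}
    (hf : FacN N f) (hg : FacN N g) : FacN N (f + g) := by
  obtain ⟨M₁, h₁, b₁, w₁, rfl⟩ := hf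
  obtain ⟨M₂, h₂, b₂, w₂, rfl⟩ := hg
  exact ⟨M₁ ⊞ M₂, hN.biprod_mem h₁ h₂, biprod.lift b₁ b₂, biprod.desc w₁ w₂, by simp⟩

lemma IsThick.shift_mem_iff (hN : IsThick C N) (A : C) (k : ℤ) :
    A⟦k⟧ ∈ N ↔ A ∈ N := by
  refine ⟨fun h => ?_, fun h => hN.shift_mem A k h⟩
  have h2 := hN.shift_mem _ (-k) h
  exact hN.isoClosed ((shiftFunctorCompIsoId C k (-k) (by ring)).app A) h2

/-- The subtle step: a morphism which factors through `N` after composition with a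
morphism whose cone is in `N` already factors through `N`. -/
lemma FacN.of_comp_verdierW (hN : IsThick C N) {A V V' : C} {s : V ⟶ V'}
    (hs : VerdierW C N s) {g : A ⟶ V} (h : FacN N (g ≫ s)) : FacN N g := by
  obtain ⟨Z, p, θ, hT, hZ⟩ := hs
  obtain ⟨M, hM, b, w, hbw⟩ := h
  have hsp : s ≫ p = 0 := comp_distTriang_mor_zero₁₂ _ hT
  have h1 : b ≫ (w ≫ p) = 0 := by
    rw [← Category.assoc, ← hbw, Category.assoc, hsp, comp_zero]
  obtain ⟨K, κ, ω, hT'⟩ := distinguished_cocone_triangle₁ (w ≫ p)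
  have hK : K ∈ N := by
    have hdist := rot_of_distTriang _ (rot_of_distTriang _ hT')
    have hmem := hN.ext_mem _ hdist hZ (hN.shift_mem M 1 hM)
    exact (hN.shift_mem_iff K 1).mp hmem
  obtain ⟨b₁, hb₁'⟩ : ∃ b₁ : A ⟶ K, b = b₁ ≫ κ :=
    Triangle.coyoneda_exact₂ _ hT' b h1
  have h4 : (κ ≫ w) ≫ p = 0 := by
    rw [Category.assoc]
    exact comp_distTriang_mor_zero₁₂ _ hT'
  obtain ⟨lam, hlam'⟩ : ∃ lam : K ⟶ V, κ ≫ w = lam ≫ s :=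
    Triangle.coyoneda_exact₂ _ hT (κ ≫ w) h4
  have h5 : (g - b₁ ≫ lam) ≫ s = 0 := by
    rw [Preadditive.sub_comp, Category.assoc, ← hlam', ← Category.assoc, ← hb₁',
      ← hbw, sub_self]
  obtain ⟨w', c, hc⟩ : ∃ (w' : Z⟦(-1 : ℤ)⟧ ⟶ V) (c : A ⟶ Z⟦(-1 : ℤ)⟧),
      g - b₁ ≫ lam = c ≫ w' := by
    obtain ⟨c, hc⟩ := Triangle.coyoneda_exact₂ _
      (inv_rot_of_distTriang _ hT) (g - b₁ ≫ lam) h5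
    exact ⟨_, c, hc⟩
  have hgeq : g = b₁ ≫ lam + c ≫ w' := by rw [← hc]; abel
  rw [hgeq]
  exact FacN.add hN ⟨K, hK, b₁, lam, rfl⟩
    ⟨Z⟦(-1 : ℤ)⟧, hN.shift_mem Z (-1) hZ, c, w', rfl⟩

/-- Multiplicative closure of a class of morphisms. -/
inductive MClos (W : MorphismProperty C) : MorphismProperty C
  | of {X Y : C} (f : X ⟶ Y) (hf : W f) : MClos W f
  | id (X : C) : MClos W (𝟙 X)
  | comp {X Y Z : C} (f : X ⟶ Y) (g : Y ⟶ Z)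
      (hf : MClos W f) (hg : MClos W g) : MClos W (f ≫ g)

instance (W : MorphismProperty C) : (MClos W).ContainsIdentities :=
  ⟨fun X => .id X⟩

instance (W : MorphismProperty C) : (MClos W).IsMultiplicative where
  comp_mem f g hf hg := .comp f g hf hg

lemma FacN.of_comp_mclos (hN : IsThick C N) {V Z : C} {s : V ⟶ Z}
    (hs : MClos (VerdierW C N) s) :
    ∀ {A : C} (g : A ⟶ V), FacN N (g ≫ s) → FacN N g := by
  induction hs with
  | of f hf => exact fun g h => FacN.of_comp_verdierW hN hf h
  | id X => exact fun g h => by simpa using h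
  | comp f g' hf hg' IHf IHg' =>
    exact fun g h => IHf _ (IHg' _ (by rwa [Category.assoc]))

lemma ore_verdierW (hN : IsThick C N) {X' X : C} (s : X' ⟶ X) (hs : VerdierW C N s)
    {Y : C} (f : X' ⟶ Y) :
    ∃ (Y' : C) (f' : X ⟶ Y') (s' : Y ⟶ Y'), VerdierW C N s' ∧ f ≫ s' = s ≫ f' := by
  obtain ⟨Z, p, θ, hT, hZ⟩ := hs
  have hT' := inv_rot_of_distTriang _ hT
  set w : Z⟦(-1 : ℤ)⟧ ⟶ X' := (Triangle.mk s p θ).invRotate.mor₁ with hw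
  obtain ⟨Y', s', k, hT₂⟩ := distinguished_cocone_triangle (w ≫ f)
  obtain ⟨c, hc₁, -⟩ := complete_distinguished_triangle_morphism
    (Triangle.mk s p θ).invRotate (Triangle.mk (w ≫ f) s' k) hT' hT₂ (𝟙 _) f
    (by exact (Category.id_comp _).symm)
  refine ⟨Y', c, s', ⟨Z⟦(-1 : ℤ)⟧⟦(1 : ℤ)⟧, k, -(w ≫ f)⟦(1 : ℤ)⟧',
    rot_of_distTriang _ hT₂, hN.shift_mem _ 1 (hN.shift_mem _ (-1) hZ)⟩, ?_⟩
  exact hc₁.symm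

lemma ore_mclos (hN : IsThick C N) {X' X : C} (s : X' ⟶ X)
    (hs : MClos (VerdierW C N) s) :
    ∀ {Y : C} (f : X' ⟶ Y),
      ∃ (Y' : C) (f' : X ⟶ Y') (s' : Y ⟶ Y'),
        MClos (VerdierW C N) s' ∧ f ≫ s' = s ≫ f' := by
  induction hs with
  | of f hf =>
    intro Y g
    obtain ⟨Y', f', s', hs', e⟩ := ore_verdierW hN f hf g
    exact ⟨Y', f', s', .of s' hs', e⟩
  | id X => exact fun f => ⟨_, f, 𝟙 _, .id _, by simp⟩
  | comp s₁ s₂ h₁ h₂ IH₁ IH₂ =>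
    intro Y f
    obtain ⟨Y₁, f₁, t₁, ht₁, e₁⟩ := IH₁ f
    obtain ⟨Y₂, f₂, t₂, ht₂, e₂⟩ := IH₂ f₁
    refine ⟨Y₂, f₂, t₁ ≫ t₂, .comp _ _ ht₁ ht₂, ?_⟩
    rw [← Category.assoc, e₁, Category.assoc, e₂, ← Category.assoc]

lemma ext_verdierW (hN : IsThick C N) {X' X : C} (s : X' ⟶ X) (hs : VerdierW C N s)
    {Y : C} (g : X ⟶ Y) (hg : s ≫ g = 0) :
    ∃ (Y' : C) (t : Y ⟶ Y'), VerdierW C N t ∧ g ≫ t = 0 := by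
  obtain ⟨Z, p, θ, hT, hZ⟩ := hs
  obtain ⟨q, hq⟩ := Triangle.yoneda_exact₂ _ hT g hg
  obtain ⟨Y', t, k, hT₂⟩ := distinguished_cocone_triangle q
  refine ⟨Y', t, ⟨Z⟦(1 : ℤ)⟧, k, -q⟦(1 : ℤ)⟧', rot_of_distTriang _ hT₂,
    hN.shift_mem Z 1 hZ⟩, ?_⟩
  have hqt : q ≫ t = 0 := comp_distTriang_mor_zero₁₂ _ hT₂
  rw [hq]; exact (Category.assoc _ _ _).trans (by rw [hqt]; exact comp_zero)

lemma ext_mclos (hN : IsThick C N) {X' X : C} (s : X' ⟶ X)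
    (hs : MClos (VerdierW C N) s) :
    ∀ {Y : C} (g : X ⟶ Y), s ≫ g = 0 →
      ∃ (Y' : C) (t : Y ⟶ Y'), MClos (VerdierW C N) t ∧ g ≫ t = 0 := by
  induction hs with
  | of f hf =>
    intro Y g hg
    obtain ⟨Y', t, ht, h0⟩ := ext_verdierW hN f hf g hg
    exact ⟨Y', t, .of t ht, h0⟩
  | id X =>
    intro Y g hg
    rw [Category.id_comp] at hg
    exact ⟨Y, 𝟙 Y, .id Y, by rw [hg, zero_comp]⟩
  | comp s₁ s₂ h₁ h₂ IH₁ IH₂ =>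
    intro Y g hg
    rw [Category.assoc] at hg
    obtain ⟨Y₁, t₁, ht₁, e₁⟩ := IH₁ _ hg
    rw [Category.assoc] at e₁
    obtain ⟨Y₂, t₂, ht₂, e₂⟩ := IH₂ _ e₁
    exact ⟨Y₂, t₁ ≫ t₂, .comp _ _ ht₁ ht₂, by rw [← Category.assoc]; exact e₂⟩

lemma mclos_hasLeftCalculus (hN : IsThick C N) :
    (MClos (VerdierW C N)).HasLeftCalculusOfFractions where
  exists_leftFraction X Y φ := by
    obtain ⟨Y', f', s', hs', e⟩ := ore_mclos hN φ.s φ.hs φ.f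
    exact ⟨⟨f', s', hs'⟩, e⟩
  ext X' X Y f₁ f₂ s hs h := by
    have h0 : s ≫ (f₁ - f₂) = 0 := by rw [Preadditive.comp_sub, h, sub_self]
    obtain ⟨Y', t, ht, h1⟩ := ext_mclos hN s hs _ h0
    refine ⟨Y', t, ht, ?_⟩
    rwa [Preadditive.sub_comp, sub_eq_zero] at h1

lemma mclos_isInvertedBy {W : MorphismProperty C} {E : Type*} [Category E]
    {G : C ⥤ E} (hG : W.IsInvertedBy G) : (MClos W).IsInvertedBy G := by
  intro X Y f hf
  induction hf with
  | of f hf => exact hG _ hf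
  | id X => rw [G.map_id]; infer_instance
  | comp f g hf hg IH₁ IH₂ =>
    rw [G.map_comp]
    exact @IsIso.comp_isIso _ _ _ _ _ _ _ IH₁ IH₂

/-- Strict universal property of the constructed localization of the multiplicative
closure, with respect to the original class. -/
noncomputable def mclosSUP (W : MorphismProperty C) (E : Type*) [Category E] :
    Localization.StrictUniversalPropertyFixedTarget (MClos W).Q W E where
  inverts X Y f hf := (MClos W).Q_inverts _ (.of f hf)
  lift G hG := Localization.Construction.lift G (mclos_isInvertedBy hG)
  fac G hG := Localization.Construction.fac _ _
  uniq F₁ F₂ h := Localization.Construction.uniq _ _ h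

lemma isLocalization_mclos {W : MorphismProperty C} {D' : Type u₂} [Category.{v₂} D']
    (F : C ⥤ D') [F.IsLocalization W] : F.IsLocalization (MClos W) := by
  haveI : (MClos W).Q.IsLocalization W :=
    Functor.IsLocalization.mk' _ _ (mclosSUP W _) (mclosSUP W _)
  exact Functor.IsLocalization.of_equivalence_target (MClos W).Q (MClos W) F
    (Localization.uniq (MClos W).Q F W)
    (Localization.compUniqFunctor (MClos W).Q F W)

/-- A morphism killed by the localization functor factors through `N`. -/
lemma facN_of_map_eq_zero (hN : IsThick C N) {D' : Type u₂} [Category.{v₂} D']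
    [Preadditive D'] (F : C ⥤ D') [F.IsLocalization (VerdierW C N)]
    [F.PreservesZeroMorphisms]
    {A X : C} (f : A ⟶ X) (hf : F.map f = 0) : FacN N f := by
  haveI := mclos_hasLeftCalculus hN
  haveI := isLocalization_mclos (W := VerdierW C N) F
  have h : F.map f = F.map (0 : A ⟶ X) := by rw [hf, F.map_zero]
  obtain ⟨Z, s, hs, e⟩ :=
    (MorphismProperty.map_eq_iff_postcomp F (MClos (VerdierW C N)) f 0).mp h
  rw [zero_comp] at e
  exact FacN.of_comp_mclos hN hs f (by rw [e]; exact facN_zero hN _ _)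

end Ghost

section Main

open CategoryTheory.Limits ZeroObject

variable {D : Type u₂} [Category.{v₂} D] [Preadditive D] [HasZeroObject D]
  [HasShift D ℤ] [∀ n : ℤ, (shiftFunctor D n).Additive] [Pretriangulated D]

/-- Iso-closure of slices for slicings of the whole category. -/
lemma Slicing.iso_univ {C' : Type u₃} [Category.{v₃} C'] [Preadditive C']
    [HasZeroObject C'] [HasShift C' ℤ] [∀ n : ℤ, (shiftFunctor C' n).Additive]
    [Pretriangulated C'] (S : Slicing C' Set.univ) (φ : ℝ) {A B : C'} (e : A ≅ B)
    (h : A ∈ S.P φ) : B ∈ S.P φ :=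
  S.isoClosed φ e (Set.mem_univ _) h

variable (N : Set C) (hN : IsThick C N)
  (F : C ⥤ D) [F.CommShift ℤ] [F.IsTriangulated] [F.IsLocalization (VerdierW C N)]
  (S : Slicing C Set.univ) (SN : Slicing C N) (SQ : Slicing D Set.univ)

/-- Dévissage kill for maps out of a semistable object of higher phase. -/
lemma kill_left (hcomp : Compatible F S SN SQ) {φ α : ℝ} {A X : C}
    (hA : A ∈ S.P α) (hα : φ < α)
    (HX : ∀ ψ : ℝ, φ < ψ → ∀ b ∈ SN.P ψ, ∀ f : b ⟶ X, f = 0)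
    {f : A ⟶ X} (hf : FacN N f) : f = 0 := by
  obtain ⟨M, hM, b, w, rfl⟩ := hf
  by_cases hzM : IsZero M
  · rw [hzM.eq_of_tgt b 0, zero_comp]
  obtain ⟨WM⟩ := SN.hn M hM hzM
  refine WM.pre.killThru (fun i j hij hns v => ?_) b w
  have h1 : α ≤ WM.phase j := by
    by_contra hc
    push_neg at hc
    exact hns (fun u => S.hom_orth hc hA (hcomp.1 _ (WM.factor_mem j)) u)
  have h2 : φ < WM.phase i := lt_of_lt_of_le hα (h1.trans (WM.pre.phase_antitone hij))
  exact HX _ h2 _ (WM.factor_mem i) v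

/-- Dévissage kill for maps into a semistable object of lower phase. -/
lemma kill_right (hcomp : Compatible F S SN SQ) {φ α : ℝ} {A X : C}
    (hA : A ∈ S.P α) (hα : α < φ)
    (HX : ∀ ψ : ℝ, ψ < φ → ∀ d ∈ SN.P ψ, ∀ f : X ⟶ d, f = 0)
    {f : X ⟶ A} (hf : FacN N f) : f = 0 := by
  obtain ⟨M, hM, b, w, rfl⟩ := hf
  by_cases hzM : IsZero M
  · rw [hzM.eq_of_tgt b 0, zero_comp]
  obtain ⟨WM⟩ := SN.hn M hM hzM
  refine WM.pre.killThru (fun i j hij hns v => ?_) b w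
  have h1 : φ ≤ WM.phase j := by
    by_contra hc
    push_neg at hc
    exact hns (fun u => HX _ hc _ (WM.factor_mem j) u)
  have h2 : α < WM.phase i := lt_of_lt_of_le hα (h1.trans (WM.pre.phase_antitone hij))
  exact S.hom_orth h2 (hcomp.1 _ (WM.factor_mem i)) hA v

include hN in
/-- The characterisation of the slices of a compatible slicing. -/
lemma char_of_compatible (hcomp : Compatible F S SN SQ) (φ : ℝ) (X : C) :
    X ∈ S.P φ ↔
      (F.obj X ∈ SQ.P φ ∧
        (∀ ψ : ℝ, φ < ψ → ∀ b ∈ SN.P ψ, ∀ f : b ⟶ X, f = 0) ∧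
        (∀ ψ : ℝ, ψ < φ → ∀ d ∈ SN.P ψ, ∀ f : X ⟶ d, f = 0)) := by
  constructor
  · intro h
    refine ⟨hcomp.2 φ X h, fun ψ hψ b hb f => ?_, fun ψ hψ d hd f => ?_⟩
    · exact S.hom_orth hψ (hcomp.1 ψ hb) h f
    · exact S.hom_orth hψ h (hcomp.1 ψ hd) f
  · rintro ⟨hQ, hHigh, hLow⟩
    by_cases hz : IsZero X
    · exact S.zero_mem φ hz (Set.mem_univ X)
    obtain ⟨Wh⟩ := S.hn X (Set.mem_univ X) hz
    set W := Wh.pre with hWdef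
    have hfacS : ∀ i, W.factor i ∈ S.P (W.phase i) := Wh.factor_mem
    have hn1 : 0 < W.n := by
      by_contra hc
      push_neg at hc
      have hn0 : W.n = 0 := Nat.le_zero.mp hc
      have h0 : Fin.last W.n = (0 : Fin (W.n + 1)) := by
        ext
        simp [hn0]
      have hzX := W.isZero_zero
      rw [← h0, W.last_eq] at hzX
      exact hz hzX
    set i0 : Fin W.n := ⟨0, hn1⟩ with hi0def
    set iL : Fin W.n := ⟨W.n - 1, by omega⟩ with hiLdef
    have hi0le : ∀ i : Fin W.n, i0 ≤ i := fun i => by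
      simp [Fin.le_def, hi0def]
    have hiLge : ∀ i : Fin W.n, i ≤ iL := fun i => by
      have := i.isLt
      simp only [Fin.le_def, hiLdef]
      omega
    have hi0cast : i0.castSucc = (0 : Fin (W.n + 1)) := by
      ext
      simp [hi0def]
    have hiLsucc : iL.succ = Fin.last W.n := by
      ext
      simp only [Fin.val_succ, hiLdef, Fin.val_last]
      omega
    set WD := W.push F with hWDdef
    have hfacQ : ∀ i, WD.factor i ∈ SQ.P (WD.phase i) := fun i => hcomp.2 _ _ (hfacS i)
    have hisoQ : ∀ (ψ : ℝ) ⦃A B : D⦄, (A ≅ B) → A ∈ SQ.P ψ → B ∈ SQ.P ψ :=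
      fun ψ A B e h => SQ.iso_univ ψ e h
    -- the top phase is at most φ
    have hTop : W.phase i0 ≤ φ := by
      by_contra hc
      push_neg at hc
      have hFz : IsZero (WD.obj i0.succ) := by
        refine WD.topZero hisoQ SQ.hom_orth SQ.shift_mem hfacQ hQ i0.succ
          (fun i hi => ?_)
        have h1 : i ≤ i0 := Fin.succ_le_succ_iff.mp hi
        have h2 : i = i0 := le_antisymm h1 (hi0le i)
        rw [h2]
        exact hc
      have hzc : IsZero (W.obj i0.castSucc) := by
        rw [hi0cast]
        exact W.isZero_zero
      haveI : IsIso (W.toFactor i0) :=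
        (Triangle.isZero₁_iff_isIso₂ _ (W.distinguished i0)).mp hzc
      have hmem1 : W.obj i0.succ ∈ S.P (W.phase i0) :=
        S.iso_univ _ (asIso (W.toFactor i0)).symm (hfacS i0)
      have hkill : ∀ u : W.obj i0.succ ⟶ X, u = 0 := by
        intro u
        have hFu : F.map u = 0 := hFz.eq_of_src (F.map u) 0
        exact kill_left N F S SN SQ hcomp hmem1 hc hHigh
          (facN_of_map_eq_zero hN F u hFu)
      have hzz : IsZero (W.obj i0.succ) := by
        refine W.zero_of_orth S.hom_orth S.shift_mem hfacS i0.succ hmem1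
          (fun i hi => ?_) hkill
        have hlt : i0 < i := by
          rwa [← Fin.castSucc_lt_castSucc_iff, Fin.castSucc_lt_iff_succ_le]
        have := W.phase_anti i0 i hlt
        linarith
      exact Wh.factor_nonzero i0 (hzz.of_iso (asIso (W.toFactor i0)).symm)
    -- the bottom phase is at least φ
    have hBot : φ ≤ W.phase iL := by
      by_contra hc
      push_neg at hc
      obtain ⟨-, -, hzf⟩ := WD.botIso hisoQ SQ.hom_orth SQ.shift_mem hfacQ hQ
        iL.castSucc (fun i hi => by
          replace hi := Fin.castSucc_le_castSucc_iff.mp hi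
          have h2 : i = iL := le_antisymm (hiLge i) hi
          rw [h2]
          exact hc)
      have hFzf : IsZero (WD.factor iL) := hzf iL le_rfl
      have hkill : ∀ v : X ⟶ W.factor iL, v = 0 := by
        intro v
        have hFv : F.map v = 0 := hFzf.eq_of_tgt (F.map v) 0
        exact kill_right N F S SN SQ hcomp (hfacS iL) hc hLow
          (facN_of_map_eq_zero hN F v hFv)
      have hLastEq : W.obj iL.succ = X := by rw [hiLsucc, W.last_eq]
      have htf : W.toFactor iL = 0 := by
        have h2 := hkill (eqToHom hLastEq.symm ≫ W.toFactor iL)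
        calc W.toFactor iL
            = eqToHom hLastEq ≫ (eqToHom hLastEq.symm ≫ W.toFactor iL) := by simp
          _ = 0 := by rw [h2, comp_zero]
      obtain ⟨g, hg⟩ : ∃ g : (W.obj iL.castSucc)⟦(1 : ℤ)⟧ ⟶ W.factor iL,
          𝟙 (W.factor iL) = W.toShift iL ≫ g := by
        obtain ⟨g, hg⟩ := Triangle.yoneda_exact₂ _
          (rot_of_distTriang _ (W.distinguished iL)) (𝟙 (W.factor iL))
          (by change W.toFactor iL ≫ 𝟙 (W.factor iL) = 0; rw [Category.comp_id, htf])
        exact ⟨g, hg⟩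
      have hgz : g = 0 := by
        refine shift_cancel_one g (fun f => ?_)
        have hmem : (W.factor iL)⟦(-1 : ℤ)⟧ ∈ S.P (W.phase iL - 1) :=
          (S.shift_mem (W.phase iL - 1) (W.factor iL)).mp
            (by rw [sub_add_cancel]; exact hfacS iL)
        refine W.hom_to_low S.hom_orth hfacS hmem iL.castSucc (fun i hi => ?_) f
        have hlt : i < iL := by
          rwa [← Fin.castSucc_lt_castSucc_iff, Fin.castSucc_lt_iff_succ_le]
        have := W.phase_anti i iL hlt
        linarith
      have hzfL : IsZero (W.factor iL) := by
        rw [IsZero.iff_id_eq_zero, hg, hgz, comp_zero]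
      exact Wh.factor_nonzero iL hzfL
    have hphase : ∀ i, W.phase i = φ := fun i =>
      le_antisymm ((W.phase_antitone (hi0le i)).trans hTop)
        (hBot.trans (W.phase_antitone (hiLge i)))
    have hzc : IsZero (W.obj i0.castSucc) := by
      rw [hi0cast]
      exact W.isZero_zero
    haveI : IsIso (W.toFactor i0) :=
      (Triangle.isZero₁_iff_isIso₂ _ (W.distinguished i0)).mp hzc
    have hn2 : W.n = 1 := by
      by_contra hc
      have h2 : 2 ≤ W.n := by omega
      have hlt : i0 < iL := by
        simp only [Fin.lt_def, hi0def, hiLdef]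
        omega
      have := W.phase_anti i0 iL hlt
      rw [hphase i0, hphase iL] at this
      exact lt_irrefl _ this
    have hLast : W.obj i0.succ = X := by
      have h3 : i0.succ = Fin.last W.n := by
        ext
        simp only [Fin.val_succ, hi0def, Fin.val_last]
        omega
      rw [h3, W.last_eq]
    exact S.iso_univ φ ((asIso (W.toFactor i0)).symm ≪≫ eqToIso hLast)
      (by rw [← hphase i0]; exact hfacS i0)

/-- Part (i), first formula: `P_N(φ) = P(φ) ∩ N`. -/
lemma slices_inter (hcomp : Compatible F S SN SQ) (φ : ℝ) :
    SN.P φ = S.P φ ∩ N := by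
  apply Set.eq_of_subset_of_subset
  · exact fun X hX => ⟨hcomp.1 φ hX, SN.subset φ hX⟩
  · rintro X ⟨hS, hXN⟩
    by_cases hz : IsZero X
    · exact SN.zero_mem φ hz hXN
    obtain ⟨Wh⟩ := SN.hn X hXN hz
    have hfac : ∀ i, Wh.pre.factor i ∈ S.P (Wh.pre.phase i) :=
      fun i => hcomp.1 _ (Wh.factor_mem i)
    rcases Wh.pre.concentrate (fun ψ A B e h => S.iso_univ ψ e h) S.hom_orth
      S.shift_mem hfac hS with h | ⟨i, hph, ⟨e⟩⟩
    · exact absurd h hz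
    · have hmem : Wh.factor i ∈ SN.P φ := by
        rw [← hph]
        exact Wh.factor_mem i
      exact SN.isoClosed φ e hXN hmem

/-- Part (i), second formula: `P_{C/N}(φ)` is the isomorphism closure of the image
of `P(φ)`. -/
lemma slices_quot (hcomp : Compatible F S SN SQ) (φ : ℝ) :
    SQ.P φ = QuotSlices F S.P φ := by
  apply Set.eq_of_subset_of_subset
  · intro d hd
    haveI := Localization.essSurj F (VerdierW C N)
    set c := F.objPreimage d with hcdef
    have e : F.obj c ≅ d := F.objObjPreimageIso d
    by_cases hz : IsZero c
    · exact ⟨c, S.zero_mem φ hz (Set.mem_univ c), ⟨e.symm⟩⟩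
    obtain ⟨Wh⟩ := S.hn c (Set.mem_univ c) hz
    set WD := Wh.pre.push F with hWDdef
    have hQc : F.obj c ∈ SQ.P φ := SQ.iso_univ φ e.symm hd
    have hfacQ : ∀ i, WD.factor i ∈ SQ.P (WD.phase i) :=
      fun i => hcomp.2 _ _ (Wh.factor_mem i)
    rcases WD.concentrate (fun ψ A B e' h => SQ.iso_univ ψ e' h) SQ.hom_orth
      SQ.shift_mem hfacQ hQc with h | ⟨i, hph, ⟨e'⟩⟩
    · refine ⟨(0 : C), S.zero_mem φ (isZero_zero C) (Set.mem_univ _), ⟨?_⟩⟩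
      exact (h.of_iso e.symm).iso (F.map_isZero (isZero_zero C))
    · refine ⟨Wh.factor i, by rw [← hph]; exact Wh.factor_mem i, ⟨?_⟩⟩
      exact e.symm ≪≫ e'.symm
  · rintro d ⟨c, hc, ⟨e⟩⟩
    exact SQ.iso_univ φ e.symm (hcomp.2 φ c hc)

end Main

end Aux


/-- uniqueness and characterisation of compatible pairs of slicings
on a thick subcategory and on the Verdier quotient. -/
theorem statement_0 (N : Set C) (hN : IsThick C N)
    (D : Type u₂) [Category.{v₂} D] [Preadditive D] [HasZeroObject D]
    [HasShift D ℤ] [∀ n : ℤ, (shiftFunctor D n).Additive] [Pretriangulated D]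
    (F : C ⥤ D) [F.CommShift ℤ] [F.IsTriangulated] [F.IsLocalization (VerdierW C N)]
    (S : Slicing C Set.univ) (SN : Slicing C N) (SQ : Slicing D Set.univ)
    (hcomp : Compatible F S SN SQ) :
    (∀ φ : ℝ, SN.P φ = S.P φ ∩ N) ∧
    (∀ φ : ℝ, SQ.P φ = QuotSlices F S.P φ) ∧
    (∀ (SN' : Slicing C N) (SQ' : Slicing D Set.univ), Compatible F S SN' SQ' →
      (∀ φ : ℝ, SN'.P φ = SN.P φ) ∧ (∀ φ : ℝ, SQ'.P φ = SQ.P φ)) ∧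
    (∀ S' : Slicing C Set.univ, Compatible F S' SN SQ → ∀ φ : ℝ, S'.P φ = S.P φ) ∧
    (∀ (φ : ℝ) (X : C), X ∈ S.P φ ↔
      (F.obj X ∈ SQ.P φ ∧
        (∀ ψ : ℝ, φ < ψ → ∀ b ∈ SN.P ψ, ∀ f : b ⟶ X, f = 0) ∧
        (∀ ψ : ℝ, ψ < φ → ∀ d ∈ SN.P ψ, ∀ f : X ⟶ d, f = 0))) := by
  have h1 := slices_inter N F S SN SQ hcomp
  have h2 := slices_quot N F S SN SQ hcomp
  refine ⟨h1, h2, ?_, ?_, fun φ X => char_of_compatible N hN F S SN SQ hcomp φ X⟩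
  · intro SN' SQ' hcomp'
    exact ⟨fun φ => by rw [slices_inter N F S SN' SQ' hcomp' φ, h1 φ],
      fun φ => by rw [slices_quot N F S SN' SQ' hcomp' φ, h2 φ]⟩
  · intro S' hcomp' φ
    ext X
    exact (char_of_compatible N hN F S' SN SQ hcomp' φ X).trans
      (char_of_compatible N hN F S SN SQ hcomp φ X).symm

end PaperStab
end

section
/- For a lax pre-stability condition σ = (P, Z) on C with charge factoring through v : K(C) → Λ, the following are equivalent: (1) σ is a lax stability condition, i.e. there is K > 0 with |Z(v(s))| ≥ ||v(s)||/K for every massive stable object s; (2) σ is full, i.e. there is K > 0 with ||W||_σ ≤ K·||W|| for every W ∈ Hom(Λ, ℂ), where ||W|| denotes the operator norm; (3) there exists a quadratic form Δ on Λ ⊗ ℝ such that Δ(v(s)) ≥ 0 for every massive stable object s and Δ is negative definite on ker Z ⊆ Λ ⊗ ℝ. -/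
open CategoryTheory CategoryTheory.Limits CategoryTheory.Pretriangulated
open scoped ENNReal

namespace PaperStab

attribute [local instance] Classical.propDecidable

universe w w₂ u v u₂ v₂

variable (C : Type u) [Category.{v} C] [Preadditive C] [HasZeroObject C]
  [HasShift C ℤ] [∀ n : ℤ, (shiftFunctor C n).Additive] [Pretriangulated C]

variable {C}

variable (C)
variable (E : Type w) [NormedAddCommGroup E] [InnerProductSpace ℝ E] [FiniteDimensional ℝ E]

variable {C E}

open scoped RealInnerProductSpace

/-- A quadratic form on a finite-dimensional real normed space is continuous. -/
lemma quadraticForm_continuous {F : Type*} [NormedAddCommGroup F] [NormedSpace ℝ F]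
    [FiniteDimensional ℝ F] (Q : QuadraticForm ℝ F) : Continuous fun x => Q x := by
  set B : F →ₗ[ℝ] F →ₗ[ℝ] ℝ := QuadraticMap.associatedHom ℕ Q with hB
  let g : F →ₗ[ℝ] (F →L[ℝ] ℝ) :=
    (LinearMap.toContinuousLinearMap : (F →ₗ[ℝ] ℝ) ≃ₗ[ℝ] (F →L[ℝ] ℝ)).toLinearMap.comp B
  have hg : Continuous g := g.continuous_of_finiteDimensional
  have hcont : Continuous fun x => (g x) x :=
    isBoundedBilinearMap_apply.continuous.comp (hg.prodMk continuous_id)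
  have heq : (fun x => Q x) = fun x => (g x) x := by
    funext x
    have : (g x) x = B x x := rfl
    rw [this, hB, QuadraticMap.associated_eq_self_apply]
  rw [heq]
  exact hcont

/-- `‖z‖² = z.re² + z.im²` for a complex number. -/
lemma norm_sq_complex (z : ℂ) : ‖z‖ ^ 2 = z.re ^ 2 + z.im ^ 2 := by
  rw [Complex.sq_norm, Complex.normSq_apply]; ring

lemma support_to_full {vd : ChargeData C E} (σ : LaxPreStab C E Set.univ vd)
    (h : σ.HasSupport) :
    ∃ K > (0 : ℝ), ∀ W : E →L[ℝ] ℂ, σ.seminorm W ≤ ENNReal.ofReal (K * ‖W‖) := by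
  obtain ⟨K, hK, hs⟩ := h
  refine ⟨K, hK, fun W => ?_⟩
  rw [LaxPreStab.seminorm]
  refine iSup₂_le fun X hX => ?_
  have hZ : σ.Z (vd.v X) ≠ 0 := hX.2
  have hZpos : 0 < ‖σ.Z (vd.v X)‖ := norm_pos_iff.mpr hZ
  refine ENNReal.ofReal_le_ofReal ?_
  rw [div_le_iff₀ hZpos]
  have h1 : ‖W (vd.v X)‖ ≤ ‖W‖ * ‖vd.v X‖ := W.le_opNorm _
  have h2 : ‖vd.v X‖ ≤ ‖σ.Z (vd.v X)‖ * K := (div_le_iff₀ hK).mp (hs X hX)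
  nlinarith [norm_nonneg W, norm_nonneg (vd.v X), norm_nonneg (W (vd.v X))]

lemma full_to_support {vd : ChargeData C E} (σ : LaxPreStab C E Set.univ vd)
    (h : ∃ K > (0 : ℝ), ∀ W : E →L[ℝ] ℂ, σ.seminorm W ≤ ENNReal.ofReal (K * ‖W‖)) :
    σ.HasSupport := by
  obtain ⟨K, hK, hW⟩ := h
  refine ⟨K, hK, fun X hX => ?_⟩
  set s := vd.v X with hs
  have hZ : σ.Z s ≠ 0 := hX.2
  have hZpos : 0 < ‖σ.Z s‖ := norm_pos_iff.mpr hZ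
  have hs0 : s ≠ 0 := by
    intro h0
    exact hZ (by rw [h0, map_zero])
  have hspos : 0 < ‖s‖ := norm_pos_iff.mpr hs0
  set W : E →L[ℝ] ℂ := Complex.ofRealCLM.comp (innerSL ℝ s) with hWdef
  have hWs : ‖W s‖ = ‖s‖ ^ 2 := by
    have : W s = ((inner ℝ s s : ℝ) : ℂ) := by simp [hWdef]
    rw [this, Complex.norm_real, real_inner_self_eq_norm_sq]
    exact Real.norm_of_nonneg (by positivity)
  have hWnorm : ‖W‖ ≤ ‖s‖ := by
    refine W.opNorm_le_bound (norm_nonneg s) fun x => ?_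
    have : W x = ((inner ℝ s x : ℝ) : ℂ) := by simp [hWdef]
    rw [this, Complex.norm_real, Real.norm_eq_abs]
    exact abs_real_inner_le_norm s x
  have hle : ENNReal.ofReal (‖W s‖ / ‖σ.Z s‖) ≤ ENNReal.ofReal (K * ‖W‖) := by
    refine le_trans ?_ (hW W)
    rw [LaxPreStab.seminorm]
    exact le_iSup₂ (f := fun X (_ : σ.MassiveStable X) =>
      ENNReal.ofReal (‖W (vd.v X)‖ / ‖σ.Z (vd.v X)‖)) X hX
  have hreal : ‖W s‖ / ‖σ.Z s‖ ≤ K * ‖W‖ :=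
    (ENNReal.ofReal_le_ofReal_iff (mul_nonneg hK.le (norm_nonneg _))).mp hle
  rw [hWs] at hreal
  have h1 : ‖s‖ ^ 2 ≤ K * ‖W‖ * ‖σ.Z s‖ := (div_le_iff₀ hZpos).mp hreal
  have h2 : ‖s‖ ≤ K * ‖σ.Z s‖ := by
    nlinarith [mul_le_mul_of_nonneg_left hWnorm (mul_nonneg hK.le hZpos.le), hspos, hZpos, h1]
  rw [div_le_iff₀ hK]
  linarith [h2, mul_comm K ‖σ.Z s‖]

lemma support_to_quad {vd : ChargeData C E} (σ : LaxPreStab C E Set.univ vd)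
    (h : σ.HasSupport) :
    ∃ Δ : QuadraticForm ℝ E,
      (∀ X : C, σ.MassiveStable X → 0 ≤ Δ (vd.v X)) ∧
      (∀ x : E, σ.Z x = 0 → x ≠ 0 → Δ x < 0) := by
  obtain ⟨K, hK, hs⟩ := h
  set B : E →ₗ[ℝ] E →ₗ[ℝ] ℝ := LinearMap.mk₂ ℝ
    (fun x y => K ^ 2 * ((σ.Z x).re * (σ.Z y).re + (σ.Z x).im * (σ.Z y).im) - (inner ℝ x y : ℝ))
    (fun x x' y => by
      simp only [map_add, Complex.add_re, Complex.add_im, inner_add_left]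
      ring)
    (fun c x y => by
      simp only [map_smul, Complex.real_smul, Complex.mul_re, Complex.mul_im,
        Complex.ofReal_re, Complex.ofReal_im, real_inner_smul_left, smul_eq_mul]
      ring)
    (fun x y y' => by
      simp only [map_add, Complex.add_re, Complex.add_im, inner_add_right]
      ring)
    (fun c x y => by
      simp only [map_smul, Complex.real_smul, Complex.mul_re, Complex.mul_im,
        Complex.ofReal_re, Complex.ofReal_im, real_inner_smul_right, smul_eq_mul]
      ring) with hBdef
  have hBapp : ∀ x : E, LinearMap.BilinMap.toQuadraticMap B x =
      K ^ 2 * ((σ.Z x).re * (σ.Z x).re + (σ.Z x).im * (σ.Z x).im) - (inner ℝ x x : ℝ) := fun x => rfl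
  refine ⟨LinearMap.BilinMap.toQuadraticMap B, fun X hX => ?_, fun x hZx hx0 => ?_⟩
  · rw [hBapp, real_inner_self_eq_norm_sq]
    set s := vd.v X
    have hZpos : 0 < ‖σ.Z s‖ := norm_pos_iff.mpr hX.2
    have h2 : ‖s‖ ≤ ‖σ.Z s‖ * K := (div_le_iff₀ hK).mp (hs X hX)
    have h3 : ‖σ.Z s‖ ^ 2 = (σ.Z s).re ^ 2 + (σ.Z s).im ^ 2 := norm_sq_complex _
    nlinarith [norm_nonneg s]
  · rw [hBapp, hZx, real_inner_self_eq_norm_sq]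
    have : 0 < ‖x‖ := norm_pos_iff.mpr hx0
    simp only [Complex.zero_re, Complex.zero_im]
    nlinarith

lemma quad_to_support {vd : ChargeData C E} (σ : LaxPreStab C E Set.univ vd)
    (h : ∃ Δ : QuadraticForm ℝ E,
      (∀ X : C, σ.MassiveStable X → 0 ≤ Δ (vd.v X)) ∧
      (∀ x : E, σ.Z x = 0 → x ≠ 0 → Δ x < 0)) :
    σ.HasSupport := by
  obtain ⟨Δ, h1, h2⟩ := h
  by_cases hex : ∃ X : C, σ.MassiveStable X
  · obtain ⟨X0, hX0⟩ := hex
    set A : Set E := {x | ‖x‖ = 1 ∧ 0 ≤ Δ x} with hA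
    have hmem : ∀ X : C, σ.MassiveStable X → (‖vd.v X‖⁻¹ • vd.v X) ∈ A := by
      intro X hX
      have hs0 : vd.v X ≠ 0 := by
        intro h0
        exact hX.2 (by rw [h0, map_zero])
      have hspos : 0 < ‖vd.v X‖ := norm_pos_iff.mpr hs0
      constructor
      · rw [norm_smul, norm_inv, norm_norm, inv_mul_cancel₀ hspos.ne']
      · rw [QuadraticMap.map_smul]
        have := h1 X hX
        have hnn : (0:ℝ) ≤ ‖vd.v X‖⁻¹ * ‖vd.v X‖⁻¹ := by positivity
        simpa [smul_eq_mul] using mul_nonneg hnn this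
    have hAne : A.Nonempty := ⟨_, hmem X0 hX0⟩
    have hclosed : IsClosed A := by
      have : A = {x : E | ‖x‖ = 1} ∩ {x : E | 0 ≤ Δ x} := by
        ext x; simp [hA, Set.mem_setOf_eq, Set.mem_inter_iff]
      rw [this]
      exact (isClosed_eq continuous_norm continuous_const).inter
        (isClosed_le continuous_const (quadraticForm_continuous Δ))
    have hsub : A ⊆ Metric.sphere 0 1 := fun x hx => by
      simp [Metric.mem_sphere, dist_zero_right, hx.1]
    have hcomp : IsCompact A :=
      IsCompact.of_isClosed_subset (isCompact_sphere (0:E) 1) hclosed hsub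
    obtain ⟨a, haA, hamin⟩ := hcomp.exists_isMinOn hAne
      ((continuous_norm.comp σ.Z.continuous).continuousOn)
    have ha : ∀ x ∈ A, ‖σ.Z a‖ ≤ ‖σ.Z x‖ := fun x hx => isMinOn_iff.mp hamin x hx
    have hm : 0 < ‖σ.Z a‖ := by
      rcases eq_or_ne (σ.Z a) 0 with hz | hz
      · exfalso
        have hane : a ≠ 0 := by
          intro e
          have := haA.1
          rw [e, norm_zero] at this
          exact one_ne_zero this.symm
        exact absurd (h2 a hz hane) (not_lt.mpr haA.2)
      · exact norm_pos_iff.mpr hz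
    refine ⟨1 / ‖σ.Z a‖, by positivity, fun X hX => ?_⟩
    have hs0 : vd.v X ≠ 0 := fun h0 => hX.2 (by rw [h0, map_zero])
    have hspos : 0 < ‖vd.v X‖ := norm_pos_iff.mpr hs0
    have hu := ha _ (hmem X hX)
    have heq : ‖σ.Z (‖vd.v X‖⁻¹ • vd.v X)‖ = ‖vd.v X‖⁻¹ * ‖σ.Z (vd.v X)‖ := by
      rw [map_smul, norm_smul, norm_inv, norm_norm]
    rw [heq] at hu
    have hkey : ‖vd.v X‖ * ‖σ.Z a‖ ≤ ‖σ.Z (vd.v X)‖ := by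
      calc ‖vd.v X‖ * ‖σ.Z a‖ ≤ ‖vd.v X‖ * (‖vd.v X‖⁻¹ * ‖σ.Z (vd.v X)‖) :=
            mul_le_mul_of_nonneg_left hu hspos.le
        _ = ‖σ.Z (vd.v X)‖ := by
            rw [← mul_assoc, mul_inv_cancel₀ hspos.ne', one_mul]
    have hrw : ‖vd.v X‖ / (1 / ‖σ.Z a‖) = ‖vd.v X‖ * ‖σ.Z a‖ := by
      field_simp
    rw [hrw]
    exact hkey
  · exact ⟨1, one_pos, fun X hX => absurd ⟨X, hX⟩ hex⟩

/-- equivalent formulations of the support property for a lax pre-stability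
condition: support, fullness, and existence of a suitable quadratic form. -/
theorem statement_5 (vd : ChargeData C E) (σ : LaxPreStab C E Set.univ vd) :
    (σ.HasSupport ↔
      ∃ K > (0 : ℝ), ∀ W : E →L[ℝ] ℂ, σ.seminorm W ≤ ENNReal.ofReal (K * ‖W‖)) ∧
    (σ.HasSupport ↔
      ∃ Δ : QuadraticForm ℝ E,
        (∀ X : C, σ.MassiveStable X → 0 ≤ Δ (vd.v X)) ∧
        (∀ x : E, σ.Z x = 0 → x ≠ 0 → Δ x < 0)) := by
  constructor
  · exact ⟨support_to_full σ, full_to_support σ⟩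
  · exact ⟨support_to_quad σ, quad_to_support σ⟩

end PaperStab
end
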